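/- Let A be an n×n matrix over a commutative ring whose rows each sum to zero. Then all principal (n−1)×(n−1) minors of A obtained by deleting the i-th row and i-th column, for varying i, are equal whenever the columns of A also each sum to zero. -/
import Mathlib


open Finset Matrix

/-- A square matrix over a commutative ring all of whose rows sum to zero has
zero determinant. -/
private lemma det_eq_zero_of_row_sums_zero {n : ℕ} {R : Type*} [CommRing R]
    (M : Matrix (Fin (n + 1)) (Fin (n + 1)) R) (h : ∀ i, ∑ j, M i j = 0) :
    M.det = 0 := by
  have hv : M *ᵥ (fun _ => (1 : R)) = 0 := by
    ext i
    simpa [Matrix.mulVec, dotProduct] using h i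
  have h2 : M.det • (fun _ => (1 : R)) = (0 : Fin (n + 1) → R) := by
    calc M.det • (fun _ => (1 : R))
        = (M.det • (1 : Matrix (Fin (n + 1)) (Fin (n + 1)) R)) *ᵥ fun _ => 1 := by
          rw [smul_mulVec, one_mulVec]
      _ = (M.adjugate * M) *ᵥ fun _ => 1 := by rw [Matrix.adjugate_mul]
      _ = M.adjugate *ᵥ (M *ᵥ fun _ => 1) := by rw [Matrix.mulVec_mulVec]
      _ = 0 := by rw [hv, Matrix.mulVec_zero]
  simpa using congrFun h2 0

/-- A square matrix over a commutative ring all of whose columns sum to zero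
has zero determinant. -/
private lemma det_eq_zero_of_col_sums_zero {n : ℕ} {R : Type*} [CommRing R]
    (M : Matrix (Fin (n + 1)) (Fin (n + 1)) R) (h : ∀ j, ∑ i, M i j = 0) :
    M.det = 0 := by
  rw [← Matrix.det_transpose]
  exact det_eq_zero_of_row_sums_zero Mᵀ (fun i => by simpa using h i)

/-- Replacing row `i` by the `i`-th standard basis vector computes the
principal minor at `i`. -/
private lemma det_updateRow_single_self {n : ℕ} {R : Type*} [CommRing R]
    (A : Matrix (Fin (n + 1)) (Fin (n + 1)) R) (i : Fin (n + 1)) :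
    (A.updateRow i (Pi.single i 1)).det
      = (A.submatrix i.succAbove i.succAbove).det := by
  rw [Matrix.det_succ_row (A.updateRow i (Pi.single i 1)) i]
  rw [Finset.sum_eq_single i]
  · have hsub : (A.updateRow i (Pi.single i 1)).submatrix i.succAbove i.succAbove
        = A.submatrix i.succAbove i.succAbove := by
      ext a b
      simp [Matrix.submatrix_apply, Matrix.updateRow_ne (Fin.succAbove_ne i a)]
    rw [hsub]
    have : ((-1 : R)) ^ ((i : ℕ) + (i : ℕ)) = 1 :=
      Even.neg_one_pow ⟨i, rfl⟩
    simp [this]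
  · intro j _ hji
    simp [Matrix.updateRow_self, Pi.single_apply, hji]
  · simp

/-- Replacing column `j` by the `j`-th standard basis vector computes the
principal minor at `j`. -/
private lemma det_updateCol_single_self {n : ℕ} {R : Type*} [CommRing R]
    (A : Matrix (Fin (n + 1)) (Fin (n + 1)) R) (j : Fin (n + 1)) :
    (A.updateCol j (Pi.single j 1)).det
      = (A.submatrix j.succAbove j.succAbove).det := by
  rw [← Matrix.det_transpose, ← Matrix.updateRow_transpose,
    det_updateRow_single_self Aᵀ j, ← Matrix.transpose_submatrix,
    Matrix.det_transpose]

/-- If every row and every column of a square matrix `A` sums to zero, then all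
principal minors of `A` obtained by deleting the `i`-th row and `i`-th column
are equal, independently of `i`. -/
theorem principal_minors_equal {n : ℕ} {R : Type*} [CommRing R]
    (A : Matrix (Fin (n + 1)) (Fin (n + 1)) R)
    (hrow : ∀ i, ∑ j, A i j = 0) (hcol : ∀ j, ∑ i, A i j = 0) :
    ∀ i j : Fin (n + 1),
      (A.submatrix i.succAbove i.succAbove).det
        = (A.submatrix j.succAbove j.succAbove).det := by
  intro i j
  -- Step 1: det(updateRow A i eᵢ) = det(updateRow A i eⱼ)  (needs row sums)
  have step1 : (A.updateRow i (Pi.single i 1)).det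
      = (A.updateRow i (Pi.single j 1)).det := by
    have hdecomp : (Pi.single i 1 : Fin (n + 1) → R)
        = (Pi.single i 1 - Pi.single j 1) + Pi.single j 1 := by
      abel
    rw [hdecomp, Matrix.det_updateRow_add]
    have hz : (A.updateRow i (Pi.single i 1 - Pi.single j 1)).det = 0 := by
      apply det_eq_zero_of_row_sums_zero
      intro k
      by_cases hk : k = i
      · subst hk
        simp [Matrix.updateRow_self, Pi.single_apply, Finset.sum_sub_distrib]
      · have h1 : ∀ l, (A.updateRow i (Pi.single i 1 - Pi.single j 1)) k l = A k l :=
          fun l => congrFun (Matrix.updateRow_ne hk) l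
        simp only [h1]
        exact hrow k
    rw [hz, zero_add]
  -- Step 2 (bridge, left): det(updateRow A i eⱼ)
  --   = det(updateColumn (updateRow A i eⱼ) j eᵢ)
  set M1 := A.updateRow i (Pi.single j 1) with hM1
  have step2 : M1.det
      = (M1.updateCol j (Pi.single i 1)).det := by
    have hsplit : (fun k => M1 k j)
        = (fun k => if k = i then 0 else A k j) + Pi.single i 1 := by
      funext k
      by_cases hk : k = i
      · subst hk
        simp [hM1, Matrix.updateRow_self, Pi.single_apply]
      · simp [hM1, Matrix.updateRow_ne hk, Pi.single_apply, hk]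
    conv_lhs => rw [← Matrix.updateCol_eq_self M1 j, hsplit,
      Matrix.det_updateCol_add]
    have hz : (M1.updateCol j fun k => if k = i then 0 else A k j).det = 0 := by
      apply Matrix.det_eq_zero_of_row_eq_zero i
      intro l
      by_cases hl : l = j
      · subst hl
        simp [Matrix.updateCol_self]
      · simp [Matrix.updateCol_ne hl, hM1, Matrix.updateRow_self,
          Pi.single_apply, hl]
    rw [hz, zero_add]
  -- The doubly updated matrices agree:
  have hDD : M1.updateCol j (Pi.single i 1)
      = (A.updateCol j (Pi.single i 1)).updateRow i (Pi.single j 1) := by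
    ext k l
    by_cases hk : k = i <;> by_cases hl : l = j
    · subst hk; subst hl
      simp [hM1, Matrix.updateCol_self, Matrix.updateRow_self, Pi.single_apply]
    · subst hk
      simp [hM1, Matrix.updateCol_ne hl, Matrix.updateRow_self]
    · subst hl
      simp [hM1, Matrix.updateCol_self, Matrix.updateRow_ne hk, Pi.single_apply]
    · simp [hM1, Matrix.updateCol_ne hl, Matrix.updateRow_ne hk]
  -- Step 3 (bridge, right): det(updateRow (updateColumn A j eᵢ) i eⱼ)
  --   = det(updateColumn A j eᵢ)
  set M2 := A.updateCol j (Pi.single i 1) with hM2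
  have step3 : (M2.updateRow i (Pi.single j 1)).det = M2.det := by
    have hsplit : M2 i
        = (fun l => if l = j then 0 else A i l) + Pi.single j 1 := by
      funext l
      by_cases hl : l = j
      · subst hl
        simp [hM2, Matrix.updateCol_self, Pi.single_apply]
      · simp [hM2, Matrix.updateCol_ne hl, Pi.single_apply, hl]
    conv_rhs => rw [← Matrix.updateRow_eq_self M2 i, hsplit,
      Matrix.det_updateRow_add]
    have hz : (M2.updateRow i fun l => if l = j then 0 else A i l).det = 0 := by
      apply Matrix.det_eq_zero_of_column_eq_zero j
      intro k
      by_cases hk : k = i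
      · subst hk
        simp [Matrix.updateRow_self]
      · simp [Matrix.updateRow_ne hk, hM2, Matrix.updateCol_self,
          Pi.single_apply, hk]
    rw [hz, zero_add]
  -- Step 4: det(updateColumn A j eᵢ) = det(updateColumn A j eⱼ)  (needs col sums)
  have step4 : (A.updateCol j (Pi.single i 1)).det
      = (A.updateCol j (Pi.single j 1)).det := by
    have hdecomp : (Pi.single i 1 : Fin (n + 1) → R)
        = (Pi.single i 1 - Pi.single j 1) + Pi.single j 1 := by
      abel
    rw [hdecomp, Matrix.det_updateCol_add]
    have hz : (A.updateCol j (Pi.single i 1 - Pi.single j 1)).det = 0 := by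
      apply det_eq_zero_of_col_sums_zero
      intro l
      by_cases hl : l = j
      · subst hl
        simp [Matrix.updateCol_self, Pi.single_apply, Finset.sum_sub_distrib]
      · have h1 : ∀ k, (A.updateCol j (Pi.single i 1 - Pi.single j 1)) k l = A k l :=
          fun k => Matrix.updateCol_ne hl
        simp only [h1]
        exact hcol l
    rw [hz, zero_add]
  calc (A.submatrix i.succAbove i.succAbove).det
      = (A.updateRow i (Pi.single i 1)).det := (det_updateRow_single_self A i).symm
    _ = M1.det := step1
    _ = (M1.updateCol j (Pi.single i 1)).det := step2
    _ = (M2.updateRow i (Pi.single j 1)).det := by rw [hDD]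
    _ = M2.det := step3
    _ = (A.updateCol j (Pi.single j 1)).det := step4
    _ = (A.submatrix j.succAbove j.succAbove).det := det_updateCol_single_self A j
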